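/- Let f:[0,∞)→[0,∞) be non-increasing and suppose there are ε, K > 0 such that K·f(t)^{1+ε} ≤ f(t-1) - f(t+1) for all t ≥ 1. Then there exists a constant C such that f(t) ≤ C·t^{-1/ε} for all t ≥ 1. -/

import Mathlib

private lemma slope_bound' {q x : ℝ} (hq : 0 < q) (hx : 1 ≤ x) :
    x ^ (-q) - (x + 1) ^ (-q) ≤ q * x ^ (-q - 1) := by
  have hx0 : (0:ℝ) < x := by linarith
  have hderiv : ∀ y ∈ Set.Ioo x (x+1), HasDerivAt (fun y : ℝ => y ^ (-q)) (-q * y ^ (-q - 1)) y := by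
    intro y hy
    exact Real.hasDerivAt_rpow_const (Or.inl (by nlinarith [hy.1] : y ≠ 0))
  have hcont : ContinuousOn (fun y : ℝ => y ^ (-q)) (Set.Icc x (x+1)) := by
    intro y hy
    have hy0 : y ≠ 0 := by have := hy.1; intro h; rw [h] at this; linarith
    exact (Real.hasDerivAt_rpow_const (p := -q) (Or.inl hy0)).continuousAt.continuousWithinAt
  obtain ⟨c, hc, heq⟩ := exists_hasDerivAt_eq_slope (fun y : ℝ => y ^ (-q))
    (fun y => -q * y ^ (-q - 1)) (by linarith : x < x + 1) hcont hderiv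
  have h1 : x + 1 - x = 1 := by ring
  rw [h1, div_one] at heq
  have hcle : c ^ (-q - 1) ≤ x ^ (-q - 1) :=
    Real.rpow_le_rpow_of_nonpos hx0 hc.1.le (by linarith)
  have h2 : x ^ (-q) - (x+1) ^ (-q) = q * c ^ (-q-1) := by nlinarith [heq]
  rw [h2]
  exact mul_le_mul_of_nonneg_left hcle hq.le

theorem stmt_0 (f : ℝ → ℝ) (ε K : ℝ) (hε : 0 < ε) (hK : 0 < K)
    (hnonneg : ∀ t : ℝ, 0 ≤ t → 0 ≤ f t)
    (hmono : ∀ s t : ℝ, 0 ≤ s → s ≤ t → f t ≤ f s)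
    (hineq : ∀ t : ℝ, 1 ≤ t → K * f t ^ (1 + ε) ≤ f (t - 1) - f (t + 1)) :
    ∃ C : ℝ, ∀ t : ℝ, 1 ≤ t → f t ≤ C * t ^ (-(1 / ε)) := by
  set q : ℝ := 1 / ε with hqdef
  have hq0 : 0 < q := by positivity
  have hqe : q * ε = 1 := by rw [hqdef]; field_simp
  -- the discrete inequality at even points
  have hkey : ∀ n : ℕ, K * f (2*(n:ℝ)+2) ^ (1+ε) ≤ f (2*(n:ℝ)) - f (2*(n:ℝ)+2) := by
    intro n
    have hn0 : (0:ℝ) ≤ n := n.cast_nonneg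
    have h := hineq (2*(n:ℝ)+1) (by linarith)
    have e1 : (2*(n:ℝ)+1) - 1 = 2*(n:ℝ) := by ring
    have e2 : (2*(n:ℝ)+1) + 1 = 2*(n:ℝ)+2 := by ring
    rw [e1, e2] at h
    have hm : f (2*(n:ℝ)+2) ≤ f (2*(n:ℝ)+1) := hmono _ _ (by linarith) (by linarith)
    have hp : f (2*(n:ℝ)+2) ^ (1+ε) ≤ f (2*(n:ℝ)+1) ^ (1+ε) :=
      Real.rpow_le_rpow (hnonneg _ (by linarith)) hm (by linarith)
    nlinarith [hp]
  -- choose M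
  set X : ℝ := q * 2 ^ (q+1) / K with hXdef
  have hX0 : 0 < X := by positivity
  set M : ℝ := max (f 0) (X ^ (1/ε)) with hMdef
  have hM0 : 0 < M := lt_of_lt_of_le (by positivity) (le_max_right _ _)
  have hMf0 : f 0 ≤ M := le_max_left _ _
  have hMK : q * 2 ^ (q+1) ≤ K * M ^ ε := by
    have h1 : X ^ (1/ε) ≤ M := le_max_right _ _
    have h2 : (X ^ (1/ε)) ^ ε ≤ M ^ ε :=
      Real.rpow_le_rpow (by positivity) h1 hε.le
    have h3 : (X ^ (1/ε)) ^ ε = X := by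
      rw [← Real.rpow_mul hX0.le, one_div_mul_cancel hε.ne', Real.rpow_one]
    rw [h3] at h2
    have h4 : K * X = q * 2 ^ (q+1) := by rw [hXdef]; field_simp
    nlinarith [mul_le_mul_of_nonneg_left h2 hK.le]
  -- key induction
  have hind : ∀ n : ℕ, 1 ≤ n → f (2*(n:ℝ)) ≤ M * (n:ℝ) ^ (-q) := by
    intro n hn
    induction n with
    | zero => omega
    | succ m ih =>
      rcases Nat.eq_or_lt_of_le hn with h1 | h1
      · -- base case m+1 = 1
        have hm0 : m = 0 := by omega
        subst hm0
        have hc1 : ((0+1:ℕ):ℝ) = 1 := by norm_num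
        rw [hc1, Real.one_rpow, mul_one]
        have : f (2*(1:ℝ)) ≤ f 0 := hmono _ _ le_rfl (by norm_num)
        norm_num at this ⊢
        linarith
      · have hm1 : 1 ≤ m := by omega
        have hprev := ih hm1
        have hm0 : (1:ℝ) ≤ (m:ℝ) := by exact_mod_cast hm1
        have hmpos : (0:ℝ) < m := by linarith
        have hmp1 : (0:ℝ) < (m:ℝ) + 1 := by linarith
        by_contra hcon
        push_neg at hcon
        -- notation
        have hcast : (((m+1:ℕ)):ℝ) = (m:ℝ) + 1 := by push_cast; ring
        rw [hcast] at hcon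
        have hb0 : 0 ≤ M * ((m:ℝ)+1) ^ (-q) := by positivity
        have hk := hkey m
        have hf2 : f (2*((m:ℝ)+1)) = f (2*(m:ℝ)+2) := by ring_nf
        rw [hf2] at hcon
        -- lower bound for the rpow term
        have hs2 : (M * ((m:ℝ)+1) ^ (-q)) ^ (1+ε) ≤ f (2*(m:ℝ)+2) ^ (1+ε) :=
          Real.rpow_le_rpow hb0 hcon.le (by linarith)
        have hs3 : (M * ((m:ℝ)+1) ^ (-q)) ^ (1+ε)
            = M ^ (1+ε) * ((m:ℝ)+1) ^ (-q-1) := by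
          rw [Real.mul_rpow hM0.le (by positivity), ← Real.rpow_mul hmp1.le]
          have : -q * (1+ε) = -q - 1 := by rw [hqdef]; field_simp; ring
          rw [this]
        -- slope bound
        have hs5 : (m:ℝ) ^ (-q) - ((m:ℝ)+1) ^ (-q) ≤ q * (m:ℝ) ^ (-q-1) :=
          slope_bound' hq0 hm0
        -- M^{1+ε} = M * M^ε
        have hs7 : M ^ ((1:ℝ)+ε) = M * M ^ ε := by
          rw [Real.rpow_add hM0, Real.rpow_one]
        -- 2-doubling bound: n^{-q-1} ≤ 2^{q+1} (n+1)^{-q-1}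
        have hs8 : (m:ℝ) ^ (-q-1) ≤ 2 ^ (q+1) * ((m:ℝ)+1) ^ (-q-1) := by
          have h2n : (m:ℝ) + 1 ≤ 2 * m := by linarith
          have ha : (2*(m:ℝ)) ^ (-q-1) ≤ ((m:ℝ)+1) ^ (-q-1) :=
            Real.rpow_le_rpow_of_nonpos hmp1 h2n (by linarith)
          have hb : (2*(m:ℝ)) ^ (-q-1) = 2 ^ (-q-1) * (m:ℝ) ^ (-q-1) :=
            Real.mul_rpow (by norm_num) hmpos.le
          have hc : (2:ℝ) ^ (q+1) * 2 ^ (-q-1) = 1 := by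
            rw [← Real.rpow_add (by norm_num)]; norm_num
          have := mul_le_mul_of_nonneg_left ha (by positivity : (0:ℝ) ≤ 2 ^ (q+1))
          rw [hb, ← mul_assoc, hc, one_mul] at this
          exact this
        -- combine
        have hchain : M * (q * 2 ^ (q+1)) * ((m:ℝ)+1) ^ (-q-1) < M * (q * (m:ℝ) ^ (-q-1)) := by
          have c1 : K * (M ^ ((1:ℝ)+ε) * ((m:ℝ)+1) ^ (-q-1)) ≤ K * f (2*(m:ℝ)+2) ^ (1+ε) := by
            rw [← hs3]; exact mul_le_mul_of_nonneg_left hs2 hK.le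
          have c2 : f (2*(m:ℝ)) - f (2*(m:ℝ)+2) < M * (m:ℝ) ^ (-q) - M * ((m:ℝ)+1) ^ (-q) := by
            have : f (2*(m:ℝ)) ≤ M * (m:ℝ) ^ (-q) := hprev
            linarith
          have c3 : M * (m:ℝ) ^ (-q) - M * ((m:ℝ)+1) ^ (-q) ≤ M * (q * (m:ℝ) ^ (-q-1)) := by
            have := mul_le_mul_of_nonneg_left hs5 hM0.le
            linarith [this]
          have c4 : M * (q * 2 ^ (q+1)) * ((m:ℝ)+1) ^ (-q-1)
              ≤ K * (M ^ ((1:ℝ)+ε) * ((m:ℝ)+1) ^ (-q-1)) := by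
            have hp1 : (0:ℝ) ≤ ((m:ℝ)+1) ^ (-q-1) := by positivity
            have := mul_le_mul_of_nonneg_right (mul_le_mul_of_nonneg_left hMK hM0.le) hp1
            calc M * (q * 2 ^ (q+1)) * ((m:ℝ)+1) ^ (-q-1)
                ≤ M * (K * M ^ ε) * ((m:ℝ)+1) ^ (-q-1) := this
              _ = K * (M ^ ((1:ℝ)+ε) * ((m:ℝ)+1) ^ (-q-1)) := by rw [hs7]; ring
          linarith
        have hfinal : M * (q * (m:ℝ) ^ (-q-1)) ≤ M * (q * 2 ^ (q+1)) * ((m:ℝ)+1) ^ (-q-1) := by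
          have := mul_le_mul_of_nonneg_left hs8 (by positivity : (0:ℝ) ≤ M * q)
          calc M * (q * (m:ℝ) ^ (-q-1)) = M * q * ((m:ℝ) ^ (-q-1)) := by ring
            _ ≤ M * q * (2 ^ (q+1) * ((m:ℝ)+1) ^ (-q-1)) := this
            _ = M * (q * 2 ^ (q+1)) * ((m:ℝ)+1) ^ (-q-1) := by ring
        linarith
  -- final assembly
  refine ⟨M * 4 ^ q, ?_⟩
  intro t ht
  have ht0 : (0:ℝ) < t := by linarith
  have h4q : (4:ℝ) ^ q * 4 ^ (-q) = 1 := by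
    rw [← Real.rpow_add (by norm_num)]; norm_num
  rcases le_or_gt t 4 with h4 | h4
  · have hft : f t ≤ f 0 := hmono _ _ le_rfl (by linarith)
    have h1 : (4:ℝ) ^ (-q) ≤ t ^ (-q) :=
      Real.rpow_le_rpow_of_nonpos ht0 h4 (by linarith)
    have h2 : (1:ℝ) ≤ 4 ^ q * t ^ (-q) := by
      calc (1:ℝ) = 4 ^ q * 4 ^ (-q) := h4q.symm
        _ ≤ 4 ^ q * t ^ (-q) := by
            exact mul_le_mul_of_nonneg_left h1 (by positivity)
    calc f t ≤ M := le_trans hft hMf0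
      _ = M * 1 := (mul_one M).symm
      _ ≤ M * (4 ^ q * t ^ (-q)) := mul_le_mul_of_nonneg_left h2 hM0.le
      _ = M * 4 ^ q * t ^ (-q) := by ring
  · set n : ℕ := ⌊t/2⌋₊ with hndef
    have h2n : (n:ℝ) ≤ t/2 := Nat.floor_le (by positivity)
    have hn2 : t/2 - 1 < (n:ℝ) := Nat.sub_one_lt_floor (t/2)
    have ht4 : t/4 < (n:ℝ) := by linarith
    have hn1 : 1 ≤ n := by
      have : (1:ℝ) ≤ (n:ℝ) := by linarith
      exact_mod_cast this
    have hfa : f t ≤ f (2*(n:ℝ)) := hmono _ _ (by positivity) (by linarith)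
    have hfb := hind n hn1
    have hnq : (n:ℝ) ^ (-q) ≤ (t/4) ^ (-q) :=
      Real.rpow_le_rpow_of_nonpos (by linarith) ht4.le (by linarith)
    have hdiv : (t/4) ^ (-q) = 4 ^ q * t ^ (-q) := by
      rw [Real.div_rpow ht0.le (by norm_num : (0:ℝ) ≤ 4), Real.rpow_neg (by norm_num : (0:ℝ) ≤ 4)]
      field_simp
    calc f t ≤ M * (n:ℝ) ^ (-q) := le_trans hfa hfb
      _ ≤ M * (4 ^ q * t ^ (-q)) := by
          rw [← hdiv]; exact mul_le_mul_of_nonneg_left hnq hM0.le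
      _ = M * 4 ^ q * t ^ (-q) := by ring
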